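/- Fix real q with 0 < q < 1 and set Q = 1/q. For integers r ≥ 2 and k ≥ 1, define φ_r(k) = Σ_{0 < l_1 < ⋯ < l_{r-1} < k} (∏_{j=1}^{r-1} 1/(Q^{l_j} - 1)) · (q^{l_{r-1}} - q^k). Then φ_r(k) equals the negative of the coefficient of x^{r-1} in the real polynomial (q^k - 1) · [∏_{i=1}^{k} (1 - (1-x)q^i)] / [∏_{i=1}^{k} (1 - q^i)] + x·q · [∏_{i=1}^{k-1} (1 - (1-x)q^{i+1})] / [∏_{i=1}^{k-1} (1 - q^i)]. -/

import Mathlib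

lemma sum_powerset_w (s : Finset ℕ) (c : ℕ → ℝ) (x : ℝ) :
    ∑ A ∈ s.powerset, (∏ l ∈ A, c l) * x ^ A.card = ∏ i ∈ s, (1 + c i * x) := by
  have h : ∀ i ∈ s, (1 + c i * x) = (c i * x + 1) := by intro i _; ring
  rw [Finset.prod_congr rfl h, Finset.prod_add]
  refine Finset.sum_congr rfl fun A hA => ?_
  rw [Finset.prod_const_one, mul_one, Finset.prod_mul_distrib, Finset.prod_const]

lemma shift_prod (q x : ℝ) : ∀ n, 1 ≤ n →
    (1 - (1-x)*q) * ∏ i ∈ Finset.Icc 1 (n-1), (1 - (1-x)*q^(i+1))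
      = ∏ i ∈ Finset.Icc 1 n, (1 - (1-x)*q^i) := by
  intro n hn
  induction n, hn using Nat.le_induction with
  | base => simp
  | succ n hn ih =>
    have h1 : (n+1) - 1 = n := rfl
    rw [h1]
    have h2 : n = (n-1) + 1 := (Nat.succ_pred_eq_of_pos hn).symm
    rw [h2, Finset.prod_Icc_succ_top (by omega), Finset.prod_Icc_succ_top (by omega), ← h2]
    rw [← mul_assoc, ih]

lemma step_alg (x q a d p p' : ℝ) (hd : d ≠ 0) (he : 1 - a ≠ 0) (hf : 1 - q*a ≠ 0)
    (hp' : (1 - (1-x)*q) * p' = p * (1 - (1-x)*a)) :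
    -( (a-1)/(d*(1-a)) * (p * (1-(1-x)*a)) + q/d * x * p' )
      + ((a - q*a) * (p/d) + (a/(1-a) * (a - q*a) * x) * (p/d))
    = -( (q*a-1)/(d*(1-a)*(1-q*a)) * (p * (1-(1-x)*a) * (1-(1-x)*(q*a)))
        + q/(d*(1-a)) * x * (p' * (1-(1-x)*(q*a))) ) := by
  have hM : (1-q*a)^2 * (p * (1-(1-x)*a)) - q*(1-a)*(1-q*a)*x*p'
      = (1-q*a)*(p*(1-(1-x)*a)*(1-(1-x)*(q*a))) - q*(1-q*a)*x*(p'*(1-(1-x)*(q*a))) := by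
    linear_combination ((1-q*a)*q*a*x) * hp'
  calc -( (a-1)/(d*(1-a)) * (p * (1-(1-x)*a)) + q/d * x * p' )
      + ((a - q*a) * (p/d) + (a/(1-a) * (a - q*a) * x) * (p/d))
      = ((1-q*a)^2 * (p * (1-(1-x)*a)) - q*(1-a)*(1-q*a)*x*p') / (d*(1-a)*(1-q*a)) := by
        have hf' : 1 - a*q ≠ 0 := by rwa [mul_comm] at hf
        field_simp; ring
    _ = ((1-q*a)*(p*(1-(1-x)*a)*(1-(1-x)*(q*a))) - q*(1-q*a)*x*(p'*(1-(1-x)*(q*a)))) / (d*(1-a)*(1-q*a)) := by rw [hM]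
    _ = -( (q*a-1)/(d*(1-a)*(1-q*a)) * (p * (1-(1-x)*a) * (1-(1-x)*(q*a)))
        + q/(d*(1-a)) * x * (p' * (1-(1-x)*(q*a))) ) := by field_simp; ring

lemma key_real (q : ℝ) (hq0 : 0 < q) (hq1 : q < 1) (Q : ℝ) (hQ : Q = 1/q) (x : ℝ) :
    ∀ k, 1 ≤ k →
    ∑ A ∈ (Finset.Ioo 0 k).powerset,
        (∏ l ∈ A, 1/(Q^l - 1)) * (q ^ (A.sup id) - q^k) * x ^ A.card
    = -((q^k - 1)/(∏ i ∈ Finset.Icc 1 k, (1 - q^i)) * ∏ i ∈ Finset.Icc 1 k, (1 - (1-x)*q^i)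
       + q/(∏ i ∈ Finset.Icc 1 (k-1), (1 - q^i)) * x
          * ∏ i ∈ Finset.Icc 1 (k-1), (1 - (1-x)*q^(i+1))) := by
  have hqne : q ≠ 0 := ne_of_gt hq0
  have hlt : ∀ i : ℕ, 1 ≤ i → q ^ i < 1 := fun i hi => pow_lt_one₀ hq0.le hq1 (by omega)
  have hne : ∀ i : ℕ, 1 ≤ i → (1 : ℝ) - q ^ i ≠ 0 :=
    fun i hi => ne_of_gt (by linarith [hlt i hi])
  have hQe : ∀ i : ℕ, Q ^ i - 1 = (1 - q^i)/q^i := by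
    intro i
    rw [hQ, div_pow, one_pow]
    field_simp
  have hQrec : ∀ i : ℕ, 1/(Q^i - 1) = q^i/(1 - q^i) := by
    intro i; rw [hQe, one_div_div]
  have hfrac : ∀ i : ℕ, 1 ≤ i → 1 + 1/(Q^i-1) * x = (1 - (1-x)*q^i)/(1 - q^i) := by
    intro i hi
    rw [hQrec]
    field_simp [hne i hi]
    ring
  have hDne : ∀ m : ℕ, (∏ i ∈ Finset.Icc 1 m, (1 - q^i)) ≠ 0 := by
    intro m
    exact Finset.prod_ne_zero_iff.mpr fun i hi => hne i (Finset.mem_Icc.mp hi).1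
  have hW : ∀ n : ℕ, ∑ A ∈ (Finset.Ioo 0 n).powerset, (∏ l ∈ A, 1/(Q^l-1)) * x ^ A.card
      = (∏ i ∈ Finset.Icc 1 (n-1), (1 - (1-x)*q^i)) / (∏ i ∈ Finset.Icc 1 (n-1), (1 - q^i)) := by
    intro n
    rw [sum_powerset_w]
    have hIoo : Finset.Ioo 0 n = Finset.Icc 1 (n-1) := by
      ext i; simp [Finset.mem_Ioo, Finset.mem_Icc]; omega
    rw [hIoo, Finset.prod_congr rfl (fun i hi => hfrac i (Finset.mem_Icc.mp hi).1),
      Finset.prod_div_distrib]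
  intro k hk
  induction k, hk using Nat.le_induction with
  | base =>
    have h0 : Finset.Ioo 0 1 = (∅ : Finset ℕ) := rfl
    have h1 : Finset.Icc 1 1 = ({1} : Finset ℕ) := Finset.Icc_self 1
    have h2 : Finset.Icc 1 0 = (∅ : Finset ℕ) := rfl
    rw [h0, h1, h2]
    simp only [Finset.powerset_empty, Finset.sum_singleton, Finset.prod_empty,
      Finset.sup_empty, Finset.card_empty, Finset.prod_singleton, pow_zero, pow_one,
      bot_eq_zero, mul_one, one_mul]
    have := hne 1 le_rfl
    rw [pow_one] at this
    field_simp
    ring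
  | succ n hn ih =>
    have hsplit1 : ∀ f : ℕ → ℝ, ∏ i ∈ Finset.Icc 1 n, f i
        = (∏ i ∈ Finset.Icc 1 (n-1), f i) * f n := by
      intro f
      have h2 : n = (n-1) + 1 := (Nat.succ_pred_eq_of_pos hn).symm
      rw [h2, Finset.prod_Icc_succ_top (by omega), ← h2]
    have hins : Finset.Ioo 0 (n+1) = insert n (Finset.Ioo 0 n) := by
      ext i; simp [Finset.mem_Ioo]; omega
    have hnmem : n ∉ Finset.Ioo 0 n := by simp
    rw [hins, Finset.sum_powerset_insert hnmem]
    -- second sum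
    have h2 : ∀ A ∈ (Finset.Ioo 0 n).powerset,
        (∏ l ∈ insert n A, 1/(Q^l-1)) * (q ^ ((insert n A).sup id) - q^(n+1))
            * x ^ (insert n A).card
        = (q^n/(1-q^n) * (q^n - q^(n+1)) * x) * ((∏ l ∈ A, 1/(Q^l-1)) * x ^ A.card) := by
      intro A hA
      have hsub := Finset.mem_powerset.mp hA
      have hAn : n ∉ A := fun h => hnmem (hsub h)
      have hsup : (insert n A).sup id = n := by
        rw [Finset.sup_insert]
        have hle : A.sup id ≤ n :=
          Finset.sup_le fun a ha => le_of_lt (Finset.mem_Ioo.mp (hsub ha)).2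
        simpa using sup_eq_left.mpr hle
      rw [Finset.prod_insert hAn, Finset.card_insert_of_notMem hAn, hsup, hQrec]
      ring
    rw [Finset.sum_congr rfl h2, ← Finset.mul_sum]
    -- first sum
    have h1 : ∀ A ∈ (Finset.Ioo 0 n).powerset,
        (∏ l ∈ A, 1/(Q^l-1)) * (q ^ (A.sup id) - q^(n+1)) * x ^ A.card
        = (∏ l ∈ A, 1/(Q^l-1)) * (q ^ (A.sup id) - q^n) * x ^ A.card
          + (q^n - q^(n+1)) * ((∏ l ∈ A, 1/(Q^l-1)) * x ^ A.card) := by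
      intro A _; ring
    rw [Finset.sum_congr rfl h1, Finset.sum_add_distrib, ih, ← Finset.mul_sum, hW]
    rw [Nat.add_sub_cancel]
    rw [hsplit1 (fun i => 1 - (1-x)*q^i), hsplit1 (fun i => 1 - q^i),
      Finset.prod_Icc_succ_top (by omega : 1 ≤ n + 1),
      Finset.prod_Icc_succ_top (by omega : 1 ≤ n + 1),
      hsplit1 (fun i => 1 - (1-x)*q^i), hsplit1 (fun i => 1 - q^i),
      hsplit1 (fun i => 1 - (1-x)*q^(i+1))]
    have hd : (∏ i ∈ Finset.Icc 1 (n-1), (1 - q^i)) ≠ 0 := hDne (n-1)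
    have he : (1:ℝ) - q^n ≠ 0 := hne n hn
    have hf : (1:ℝ) - q * q^n ≠ 0 := by
      have := hne (n+1) (by omega); rwa [pow_succ, mul_comm (q^n) q] at this
    have hp' : (1 - (1-x)*q) * (∏ i ∈ Finset.Icc 1 (n-1), (1 - (1-x)*q^(i+1)))
        = (∏ i ∈ Finset.Icc 1 (n-1), (1 - (1-x)*q^i)) * (1 - (1-x)*q^n) := by
      rw [shift_prod q x n hn, hsplit1 (fun i => 1 - (1-x)*q^i)]
    have hs := step_alg x q (q^n) (∏ i ∈ Finset.Icc 1 (n-1), (1 - q^i))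
      (∏ i ∈ Finset.Icc 1 (n-1), (1 - (1-x)*q^i))
      (∏ i ∈ Finset.Icc 1 (n-1), (1 - (1-x)*q^(i+1))) hd he hf hp'
    linear_combination hs

open Polynomial

/-- For `0 < q < 1`, `Q = 1/q`, `r ≥ 2`, `k ≥ 1`:
`φ_r(k) = Σ_{0<l_1<⋯<l_{r-1}<k} (∏ 1/(Q^{l_j}-1))·(q^{l_{r-1}} - q^k)`
(encoded as a sum over `(r-1)`-element subsets of `{1,…,k-1}`, with `l_{r-1}`
the largest element) equals minus the coefficient of `x^{r-1}` in
`(q^k-1)·∏_{i=1}^k (1-(1-x)q^i)/∏_{i=1}^k (1-q^i)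
  + x·q·∏_{i=1}^{k-1} (1-(1-x)q^{i+1})/∏_{i=1}^{k-1} (1-q^i)`. -/
theorem phi_r_coeff_formula (q : ℝ) (hq0 : 0 < q) (hq1 : q < 1)
    (Q : ℝ) (hQ : Q = 1 / q) (r k : ℕ) (hr : 2 ≤ r) (hk : 1 ≤ k) :
    (∑ A ∈ (Finset.Ioo 0 k).powersetCard (r - 1),
      (∏ l ∈ A, 1 / (Q ^ l - 1)) * (q ^ (A.sup id) - q ^ k)) =
      -((C ((q ^ k - 1) / ∏ i ∈ Finset.Icc 1 k, (1 - q ^ i)) *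
          ∏ i ∈ Finset.Icc 1 k, (1 - (1 - X) * C (q ^ i)) +
        C (q / ∏ i ∈ Finset.Icc 1 (k - 1), (1 - q ^ i)) * X *
          ∏ i ∈ Finset.Icc 1 (k - 1), (1 - (1 - X) * C (q ^ (i + 1)))).coeff (r - 1)) := by
  have hpoly : (∑ A ∈ (Finset.Ioo 0 k).powerset,
      C ((∏ l ∈ A, 1 / (Q ^ l - 1)) * (q ^ (A.sup id) - q ^ k)) * X ^ A.card)
    = -(C ((q ^ k - 1) / ∏ i ∈ Finset.Icc 1 k, (1 - q ^ i)) *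
          ∏ i ∈ Finset.Icc 1 k, (1 - (1 - X) * C (q ^ i)) +
        C (q / ∏ i ∈ Finset.Icc 1 (k - 1), (1 - q ^ i)) * X *
          ∏ i ∈ Finset.Icc 1 (k - 1), (1 - (1 - X) * C (q ^ (i + 1)))) := by
    apply Polynomial.funext
    intro x
    have hkr := key_real q hq0 hq1 Q hQ x k hk
    simpa [Polynomial.eval_finset_sum, Polynomial.eval_prod, mul_assoc] using hkr
  rw [← Polynomial.coeff_neg, ← hpoly, Polynomial.finset_sum_coeff]
  simp only [Polynomial.coeff_C_mul, Polynomial.coeff_X_pow, mul_ite, mul_one, mul_zero]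
  rw [Finset.powersetCard_eq_filter, Finset.sum_filter]
  refine Finset.sum_congr rfl fun A hA => ?_
  by_cases h : A.card = r - 1 <;> simp [h, eq_comm]
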